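/- Let Σ and C be symmetric positive definite p×p real matrices. A real p×p matrix M satisfies the continuous Lyapunov equation MΣ + ΣM^⊤ + C = 0 if and only if there exists a skew-symmetric real p×p matrix K such that M = (K − (1/2)C)Σ^{-1}. -/
import Mathlib


open Matrix MeasureTheory

/-- A real square matrix is *stable* if every eigenvalue (over `ℂ`) has strictly
negative real part. -/
def IsStableMat {n : Type*} [Fintype n] [DecidableEq n] (M : Matrix n n ℝ) : Prop :=
  ∀ μ ∈ spectrum ℂ (M.map (algebraMap ℝ ℂ)), μ.re < 0

/-- `M ∈ ℝ^E`: the matrix `M` is supported on the directed graph with edge set `E`,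
i.e. `M j i = 0` whenever `(i, j) ∉ E`. -/
def InSupp {n : Type*} (E : Set (n × n)) (M : Matrix n n ℝ) : Prop :=
  ∀ i j : n, (i, j) ∉ E → M j i = 0

/-- The graphical continuous Lyapunov model `M_{G,C}`: positive definite matrices `S`
such that `M * S + S * Mᵀ + C = 0` for some `M ∈ ℝ^E`. -/
def LyapModel {n : Type*} [Fintype n] [DecidableEq n] (E : Set (n × n))
    (C : Matrix n n ℝ) : Set (Matrix n n ℝ) :=
  {S | S.PosDef ∧ ∃ M : Matrix n n ℝ, InSupp E M ∧ M * S + S * Mᵀ + C = 0}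

/-- Global identifiability: no two stable matrices supported on `E` yield the same
solution of the Lyapunov equation.  (Since for stable `M` the Lyapunov equation has a
unique positive definite solution `Σ(M,C)`, this is equivalent to every fiber
`F_{G,C}(M₀)` being the singleton `{M₀}`.) -/
def GloballyIdentifiable {n : Type*} [Fintype n] [DecidableEq n] (E : Set (n × n))
    (C : Matrix n n ℝ) : Prop :=
  ∀ M₁ M₂ : Matrix n n ℝ,
    InSupp E M₁ → IsStableMat M₁ → InSupp E M₂ → IsStableMat M₂ →
    ∀ S : Matrix n n ℝ, S.PosDef →
      M₁ * S + S * M₁ᵀ + C = 0 → M₂ * S + S * M₂ᵀ + C = 0 → M₁ = M₂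

/-- A directed graph is *simple* if it has no 2-cycles between distinct nodes. -/
def IsSimpleDigraph {n : Type*} (E : Set (n × n)) : Prop :=
  ∀ i j : n, i ≠ j → (i, j) ∈ E → (j, i) ∉ E

/-- The fiber `F_{G,C}(M₀)`: all stable matrices supported on `E` whose Lyapunov
solution coincides with that of `M₀`, i.e. some positive definite `S` solves the
Lyapunov equation for both `M₀` and `M`. -/
def Fiber {n : Type*} [Fintype n] [DecidableEq n] (E : Set (n × n))
    (C M₀ : Matrix n n ℝ) : Set (Matrix n n ℝ) :=
  {M | InSupp E M ∧ IsStableMat M ∧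
    ∃ S : Matrix n n ℝ, S.PosDef ∧ M₀ * S + S * M₀ᵀ + C = 0 ∧ M * S + S * Mᵀ + C = 0}

/-- The identification of the coordinate space `ℝ^{|E|}` with the matrices in `ℝ^E`:
the coordinate attached to an edge `(i,j)` is the entry `M j i`. -/
def edgeMatrix {p : ℕ} (E : Finset (Fin p × Fin p)) (f : E → ℝ) :
    Matrix (Fin p) (Fin p) ℝ :=
  fun j i => if h : (i, j) ∈ E then f ⟨(i, j), h⟩ else 0

/-- Generic identifiability: the set of parameter vectors `f ∈ ℝ^{|E|}` whose matrix
is stable but whose fiber is not a singleton is a Lebesgue null set. -/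
def GenericallyIdentifiable {p : ℕ} (E : Finset (Fin p × Fin p))
    (C : Matrix (Fin p) (Fin p) ℝ) : Prop :=
  volume {f : E → ℝ | IsStableMat (edgeMatrix E f) ∧
    Fiber (E : Set (Fin p × Fin p)) C (edgeMatrix E f) ≠ {edgeMatrix E f}} = 0

/-- `M` solves the Lyapunov equation `M Σ + Σ Mᵀ + C = 0` if and only if
`M = (K - (1/2) C) Σ⁻¹` for some skew-symmetric `K`. -/
theorem lyapunov_solution_iff_skew {p : ℕ}
    (S C M : Matrix (Fin p) (Fin p) ℝ) (hS : S.PosDef) (hC : C.PosDef) :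
    M * S + S * Mᵀ + C = 0 ↔
      ∃ K : Matrix (Fin p) (Fin p) ℝ, Kᵀ = -K ∧ M = (K - (1 / 2 : ℝ) • C) * S⁻¹ := by
  have hSinv : IsUnit S.det := isUnit_iff_ne_zero.mpr hS.det_pos.ne'
  have hSsym : Sᵀ = S := hS.1
  have hCsym : Cᵀ = C := hC.1
  constructor
  · intro h
    refine ⟨M * S + (1 / 2 : ℝ) • C, ?_, ?_⟩
    · have : Sᵀ = S := hS.1
      rw [transpose_add, transpose_mul, transpose_smul, this, hCsym]
      have : S * Mᵀ = -(M * S) - C := by linear_combination (norm := abel) h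
      rw [this]; module
    · have : M * S + (1 / 2 : ℝ) • C - (1 / 2 : ℝ) • C = M * S := by abel
      rw [this, Matrix.mul_nonsing_inv_cancel_right _ _ hSinv]
  · rintro ⟨K, hK, rfl⟩
    have h1 : (K - (1 / 2 : ℝ) • C) * S⁻¹ * S = K - (1 / 2 : ℝ) • C :=
      Matrix.nonsing_inv_mul_cancel_right _ _ hSinv
    have h2 : S * ((K - (1 / 2 : ℝ) • C) * S⁻¹)ᵀ = Kᵀ - (1 / 2 : ℝ) • C := by
      rw [transpose_mul, transpose_sub, transpose_smul, hCsym,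
        Matrix.transpose_nonsing_inv, hSsym, Matrix.mul_nonsing_inv_cancel_left _ _ hSinv]
    rw [h1, h2, hK]
    module
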